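/- For every positive integer n, the number of finite sets E of positive integers with max E = n+1, min E > ω_{2,3}(E), and |E| ≠ 2, equals F_n. -/

import Mathlib

open Finset



def Gf (m : ℕ) : Finset (Finset ℕ) :=
  (Finset.Icc 1 m).powerset.filter (fun S => ∀ x ∈ S, S.card < x)

lemma mem_Gf {m : ℕ} {S : Finset ℕ} :
    S ∈ Gf m ↔ S ⊆ Finset.Icc 1 m ∧ ∀ x ∈ S, S.card < x := by
  simp [Gf]

lemma gf_not_mem (m : ℕ) :
    (Gf (m+2)).filter (fun S => m+2 ∉ S) = Gf (m+1) := by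
  ext S
  simp only [Finset.mem_filter, mem_Gf, Finset.subset_iff, Finset.mem_Icc]
  constructor
  · rintro ⟨⟨hsub, hc⟩, hnm⟩
    refine ⟨fun x hx => ?_, hc⟩
    have := hsub hx
    have : x ≠ m + 2 := fun h => hnm (h ▸ hx)
    omega
  · rintro ⟨hsub, hc⟩
    have h2 : ∀ x ∈ S, 1 ≤ x ∧ x ≤ m + 1 := hsub
    exact ⟨⟨fun x hx => by have := h2 x hx; omega, hc⟩,
      fun h => by have := h2 _ h; omega⟩

lemma gf_mem_card (m : ℕ) :
    ((Gf (m+2)).filter (fun S => m+2 ∈ S)).card = (Gf m).card := by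
  apply Finset.card_bij (fun S _ => (S.erase (m+2)).image (· - 1))
  · -- maps into Gf m
    intro S hS
    simp only [Finset.mem_filter, mem_Gf] at hS
    obtain ⟨⟨hsub, hc⟩, hmem⟩ := hS
    have hpos : ∀ x ∈ S, 2 ≤ x := by
      intro x hx
      have h1 : 1 ≤ S.card := Finset.card_pos.mpr ⟨x, hx⟩
      have := hc x hx; omega
    have hinj : Set.InjOn (· - 1) (S.erase (m+2)) := by
      intro a ha b hb hab
      have ha' := hpos a (Finset.mem_of_mem_erase ha)
      have hb' := hpos b (Finset.mem_of_mem_erase hb)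
      simp only at hab; omega
    have hcard : ((S.erase (m+2)).image (· - 1)).card = S.card - 1 := by
      rw [Finset.card_image_of_injOn hinj, Finset.card_erase_of_mem hmem]
    rw [mem_Gf]
    constructor
    · intro y hy
      simp only [Finset.mem_image, Finset.mem_erase] at hy
      obtain ⟨x, ⟨hne, hx⟩, rfl⟩ := hy
      have := hsub hx
      simp only [Finset.mem_Icc] at this ⊢
      have := hpos x hx
      omega
    · intro y hy
      simp only [Finset.mem_image, Finset.mem_erase] at hy
      obtain ⟨x, ⟨hne, hx⟩, rfl⟩ := hy
      have := hc x hx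
      have := hpos x hx
      have h1 : 1 ≤ S.card := Finset.card_pos.mpr ⟨x, hx⟩
      omega
  · -- injective
    intro S₁ h₁ S₂ h₂ heq
    simp only [Finset.mem_filter, mem_Gf] at h₁ h₂
    have key : ∀ S : Finset ℕ, S ⊆ Finset.Icc 1 (m+2) → (∀ x ∈ S, S.card < x) →
        m+2 ∈ S → insert (m+2) (((S.erase (m+2)).image (· - 1)).image (· + 1)) = S := by
      intro S hsub hc hmem
      have hpos : ∀ x ∈ S, 2 ≤ x := by
        intro x hx
        have h1 : 1 ≤ S.card := Finset.card_pos.mpr ⟨x, hx⟩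
        have := hc x hx; omega
      rw [Finset.image_image]
      have : (S.erase (m+2)).image ((· + 1) ∘ (· - 1)) = S.erase (m+2) := by
        rw [show (S.erase (m+2)).image ((· + 1) ∘ (· - 1))
            = (S.erase (m+2)).image id from Finset.image_congr (by
          intro x hx
          have := hpos x (Finset.mem_of_mem_erase hx)
          simp only [Function.comp_apply, id_eq]; omega), Finset.image_id]
      rw [this, Finset.insert_erase hmem]
    rw [← key S₁ h₁.1.1 h₁.1.2 h₁.2, ← key S₂ h₂.1.1 h₂.1.2 h₂.2, heq]
  · -- surjective
    intro T hT
    rw [mem_Gf] at hT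
    obtain ⟨hsub, hc⟩ := hT
    refine ⟨insert (m+2) (T.image (· + 1)), ?_, ?_⟩
    · have hnm : m+2 ∉ T.image (· + 1) := by
        simp only [Finset.mem_image]
        rintro ⟨t, ht, h⟩
        have := hsub ht
        simp only [Finset.mem_Icc] at this
        omega
      have hinj : Function.Injective (· + 1 : ℕ → ℕ) := add_left_injective 1
      have hcard : (insert (m+2) (T.image (· + 1))).card = T.card + 1 := by
        rw [Finset.card_insert_of_notMem hnm, Finset.card_image_of_injective _ hinj]
      have hTm : T.card ≤ m := by
        have := Finset.card_le_card hsub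
        simpa using this
      simp only [Finset.mem_filter, mem_Gf]
      refine ⟨⟨?_, ?_⟩, Finset.mem_insert_self _ _⟩
      · intro x hx
        simp only [Finset.mem_insert, Finset.mem_image] at hx
        simp only [Finset.mem_Icc]
        rcases hx with rfl | ⟨t, ht, rfl⟩
        · omega
        · have := hsub ht; simp only [Finset.mem_Icc] at this; omega
      · intro x hx
        rw [hcard]
        simp only [Finset.mem_insert, Finset.mem_image] at hx
        rcases hx with rfl | ⟨t, ht, rfl⟩
        · omega
        · have := hc t ht; omega
    · have hnm : m+2 ∉ T.image (· + 1) := by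
        simp only [Finset.mem_image]
        rintro ⟨t, ht, h⟩
        have := hsub ht
        simp only [Finset.mem_Icc] at this
        omega
      rw [Finset.erase_insert hnm, Finset.image_image]
      rw [show T.image ((· - 1) ∘ (· + 1)) = T.image id from
        Finset.image_congr (by intro x hx; simp), Finset.image_id]

lemma gf_succ (m : ℕ) : (Gf (m+2)).card = (Gf (m+1)).card + (Gf m).card := by
  rw [← Finset.card_filter_add_card_filter_not (s := Gf (m+2))
    (p := fun S => m+2 ∈ S)]
  rw [gf_mem_card]
  have : (Gf (m+2)).filter (fun S => ¬ m+2 ∈ S) = Gf (m+1) := gf_not_mem m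
  rw [this, Nat.add_comm]

lemma gf_card (m : ℕ) : (Gf m).card = Nat.fib (m+1) := by
  induction m using Nat.strong_induction_on with
  | _ m ih =>
    match m with
    | 0 => decide
    | 1 => decide
    | (k+2) =>
      have h := gf_succ k
      have h1 := ih (k+1) (by omega)
      have h2 := ih k (by omega)
      have h3 : Nat.fib (k+2+1) = Nat.fib (k+1) + Nat.fib (k+1+1) := by
        rw [show k+2+1 = k+1+2 from rfl, Nat.fib_add_two]
      omega



def Kf (n : ℕ) : Finset (Finset ℕ) :=
  (Finset.Icc 1 (n+1)).powerset.filter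
    (fun E => n+1 ∈ E ∧ E.card ≠ 2 ∧ ∀ x ∈ E, (E \ {2,3}).card < x)

lemma mem_Kf {n : ℕ} {E : Finset ℕ} :
    E ∈ Kf n ↔ E ⊆ Finset.Icc 1 (n+1) ∧ n+1 ∈ E ∧ E.card ≠ 2 ∧
      ∀ x ∈ E, (E \ {2,3}).card < x := by
  simp [Kf, and_assoc]

lemma card_triple {a b c : ℕ} (hab : a ≠ b) (hac : a ≠ c) (hbc : b ≠ c) :
    ({a,b,c} : Finset ℕ).card = 3 := by
  rw [Finset.card_insert_of_notMem (by simp [hab, hac]),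
    Finset.card_insert_of_notMem (by simp [hbc]), Finset.card_singleton]

lemma kf_one {n : ℕ} {E : Finset ℕ} (hE : E ∈ Kf n) : 1 ∉ E := by
  obtain ⟨hsub, hmem, hcard, hcond⟩ := mem_Kf.mp hE
  intro h1
  have h := hcond 1 h1
  have h2 : 1 ∈ E \ {2,3} := by simp [Finset.mem_sdiff, h1]
  have := Finset.card_pos.mpr ⟨1, h2⟩
  omega

lemma kf_card3 {n : ℕ} {E : Finset ℕ} (hE : E ∈ Kf n) (h1 : E.card ≠ 1) :
    3 ≤ E.card := by
  obtain ⟨hsub, hmem, hcard, hcond⟩ := mem_Kf.mp hE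
  have := Finset.card_pos.mpr ⟨_, hmem⟩
  omega

lemma kf_singleton {n : ℕ} {E : Finset ℕ} (hE : E ∈ Kf n) (h1 : E.card = 1) :
    E = {n+1} := by
  obtain ⟨a, rfl⟩ := Finset.card_eq_one.mp h1
  obtain ⟨hsub, hmem, hcard, hcond⟩ := mem_Kf.mp hE
  simp only [Finset.mem_singleton] at hmem
  rw [hmem]

lemma kf_two {n : ℕ} {E : Finset ℕ} (hE : E ∈ Kf n) (h1 : E.card ≠ 1)
    (h2 : 2 ∈ E) : E = {2, 3, n+1} ∧ 4 ≤ n+1 := by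
  obtain ⟨hsub, hmem, hcard, hcond⟩ := mem_Kf.mp hE
  have hc3 := kf_card3 hE h1
  have hlt := hcond 2 h2
  have h1n := kf_one hE
  have hsub2 : E ⊆ insert 2 (insert 3 (E \ {2,3})) := by
    intro x hx
    simp only [Finset.mem_insert, Finset.mem_sdiff, Finset.mem_singleton]
    by_cases hx2 : x = 2
    · tauto
    by_cases hx3 : x = 3
    · tauto
    exact Or.inr (Or.inr ⟨hx, by push_neg; exact ⟨hx2, by simpa using hx3⟩⟩)
  have hb1 := Finset.card_insert_le 2 (insert 3 (E \ {2,3}))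
  have hb2 := Finset.card_insert_le 3 (E \ {2,3})
  have hb3 := Finset.card_le_card hsub2
  have hcE : E.card = 3 := by omega
  have hn4 : 4 ≤ n+1 := by
    by_contra hcon
    push_neg at hcon
    have hsub3 : E ⊆ ({2,3} : Finset ℕ) := by
      intro x hx
      have hx1 : x ≠ 1 := fun he => h1n (he ▸ hx)
      have := hsub hx
      simp only [Finset.mem_Icc] at this
      simp only [Finset.mem_insert, Finset.mem_singleton]
      omega
    have := Finset.card_le_card hsub3
    have h22 : ({2,3} : Finset ℕ).card = 2 := by decide
    omega
  have hmem' : n+1 ∈ E \ {2,3} := by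
    simp only [Finset.mem_sdiff, Finset.mem_insert, Finset.mem_singleton]
    exact ⟨hmem, by omega⟩
  have hone : (E \ {2,3}).card = 1 := by
    have := Finset.card_pos.mpr ⟨_, hmem'⟩
    omega
  obtain ⟨a, ha⟩ := Finset.card_eq_one.mp hone
  have han : a = n+1 := by rw [ha] at hmem'; exact (by simpa using hmem' : n+1 = a).symm
  subst han
  have hsubE : E ⊆ {2, 3, n+1} := by
    intro x hx
    have := hsub2 hx
    rw [ha] at this
    simpa using this
  have hct : ({2,3,n+1} : Finset ℕ).card = 3 :=
    card_triple (by omega) (by omega) (by omega)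
  exact ⟨Finset.eq_of_subset_of_card_le hsubE (by omega), hn4⟩

lemma kf_three {n : ℕ} {E : Finset ℕ} (hE : E ∈ Kf n) (h1 : E.card ≠ 1)
    (h2 : 2 ∉ E) (h3 : 3 ∈ E) :
    ∃ x, 4 ≤ x ∧ x ≤ n ∧ E = {3, x, n+1} ∧
      (((E.erase 3).erase (n+1)).sum id) = x := by
  obtain ⟨hsub, hmem, hcard, hcond⟩ := mem_Kf.mp hE
  have hc3 := kf_card3 hE h1
  have h1n := kf_one hE
  have hsd : E \ {2,3} = E.erase 3 := by
    ext x
    simp only [Finset.mem_sdiff, Finset.mem_insert, Finset.mem_singleton,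
      Finset.mem_erase]
    constructor
    · rintro ⟨hx, h⟩; exact ⟨fun he => h (Or.inr he), hx⟩
    · rintro ⟨hx3, hx⟩
      refine ⟨hx, ?_⟩
      rintro (rfl | rfl)
      · exact h2 hx
      · exact hx3 rfl
  have hce : (E.erase 3).card = E.card - 1 := Finset.card_erase_of_mem h3
  have hlt := hcond 3 h3
  rw [hsd] at hlt
  have hcE : E.card = 3 := by omega
  have hn4 : 4 ≤ n+1 := by
    by_contra hcon
    push_neg at hcon
    have hsub3 : E ⊆ ({3} : Finset ℕ) := by
      intro x hx
      have hx1 : x ≠ 1 := fun he => h1n (he ▸ hx)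
      have hx2 : x ≠ 2 := fun he => h2 (he ▸ hx)
      have := hsub hx
      simp only [Finset.mem_Icc] at this
      simp only [Finset.mem_singleton]
      omega
    have := Finset.card_le_card hsub3
    simp only [Finset.card_singleton] at this
    omega
  have hne : n+1 ∈ E.erase 3 := Finset.mem_erase.mpr ⟨by omega, hmem⟩
  have hcD : ((E.erase 3).erase (n+1)).card = 1 := by
    rw [Finset.card_erase_of_mem hne]
    omega
  obtain ⟨x, hx⟩ := Finset.card_eq_one.mp hcD
  have hxD : x ∈ (E.erase 3).erase (n+1) := hx ▸ Finset.mem_singleton_self x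
  obtain ⟨hxn, hx3, hxE⟩ : x ≠ n+1 ∧ x ≠ 3 ∧ x ∈ E := by
    simp only [Finset.mem_erase] at hxD
    tauto
  have hx1 : x ≠ 1 := fun he => h1n (he ▸ hxE)
  have hx2 : x ≠ 2 := fun he => h2 (he ▸ hxE)
  have hxr := hsub hxE
  simp only [Finset.mem_Icc] at hxr
  refine ⟨x, by omega, by omega, ?_, by rw [hx, Finset.sum_singleton]; rfl⟩
  have hsubE : ({3, x, n+1} : Finset ℕ) ⊆ E := by
    intro y hy
    simp only [Finset.mem_insert, Finset.mem_singleton] at hy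
    rcases hy with rfl | rfl | rfl
    exacts [h3, hxE, hmem]
  have hct : ({3,x,n+1} : Finset ℕ).card = 3 :=
    card_triple (Ne.symm hx3) (by omega) (by omega)
  exact (Finset.eq_of_subset_of_card_le hsubE (by omega)).symm

lemma kf_fat {n : ℕ} {E : Finset ℕ} (hE : E ∈ Kf n) (h2 : 2 ∉ E) (h3 : 3 ∉ E) :
    ∀ x ∈ E, E.card < x := by
  obtain ⟨hsub, hmem, hcard, hcond⟩ := mem_Kf.mp hE
  have hsd : E \ {2,3} = E := by
    ext x
    simp only [Finset.mem_sdiff, Finset.mem_insert, Finset.mem_singleton]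
    constructor
    · exact fun h => h.1
    · intro hx
      refine ⟨hx, ?_⟩
      rintro (rfl | rfl)
      exacts [h2 hx, h3 hx]
  intro x hx
  have := hcond x hx
  rwa [hsd] at this

lemma image_up_down (T : Finset ℕ) (h : ∀ x ∈ T, 1 ≤ x) :
    (T.image (· - 1)).image (· + 1) = T := by
  rw [Finset.image_image,
    show T.image ((· + 1) ∘ (· - 1)) = T.image id from Finset.image_congr (by
      intro x hx
      have := h x hx
      simp only [Function.comp_apply, id_eq]
      omega), Finset.image_id]

lemma image_down_up (T : Finset ℕ) : (T.image (· + 1)).image (· - 1) = T := by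
  rw [Finset.image_image,
    show T.image ((· - 1) ∘ (· + 1)) = T.image id from Finset.image_congr (by
      intro x hx; simp), Finset.image_id]

lemma erase_triple {x z : ℕ} (hx3 : x ≠ 3) (hz3 : z ≠ 3) (hxz : x ≠ z) :
    ((({3,x,z} : Finset ℕ).erase 3).erase z) = {x} := by
  rw [Finset.erase_insert (by simp [Ne.symm hx3, Ne.symm hz3]),
    Finset.erase_insert_of_ne hxz, Finset.erase_singleton]
  rfl

def phi (m : ℕ) (E : Finset ℕ) : Finset ℕ :=
  if E.card = 1 then ∅
  else if 2 ∈ E then {m}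
  else if 3 ∈ E then {(((E.erase 3).erase (m+2)).sum id) - 2}
  else (E.erase (m+2)).image (· - 1)

def psi (m : ℕ) (S : Finset ℕ) : Finset ℕ :=
  if S = ∅ then {m+2}
  else if S = {m} then {2, 3, m+2}
  else if S.card = 1 then {3, S.sum id + 2, m+2}
  else insert (m+2) (S.image (· + 1))

lemma kf_elem_ge {n : ℕ} {E : Finset ℕ} (hE : E ∈ Kf n) : ∀ x ∈ E, 2 ≤ x := by
  intro x hx
  have h1 := kf_one hE
  have := (mem_Kf.mp hE).1 hx
  simp only [Finset.mem_Icc] at this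
  have : x ≠ 1 := fun he => h1 (he ▸ hx)
  omega

lemma phi_mem (m : ℕ) {E : Finset ℕ} (hE : E ∈ Kf (m+1)) : phi m E ∈ Gf m := by
  obtain ⟨hsub, hmem, hcard, hcond⟩ := mem_Kf.mp hE
  unfold phi
  split_ifs with h1 h2 h3
  · simp [mem_Gf]
  · obtain ⟨hEeq, hm4⟩ := kf_two hE h1 h2
    rw [mem_Gf]
    constructor
    · simp only [Finset.singleton_subset_iff, Finset.mem_Icc]; omega
    · intro x hx
      simp only [Finset.mem_singleton] at hx
      subst hx
      simp only [Finset.card_singleton]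
      omega
  · obtain ⟨x, hx4, hxn, hEeq, hsum⟩ := kf_three hE h1 h2 h3
    rw [hsum, mem_Gf]
    constructor
    · simp only [Finset.singleton_subset_iff, Finset.mem_Icc]; omega
    · intro y hy
      simp only [Finset.mem_singleton] at hy
      subst hy
      simp only [Finset.card_singleton]
      omega
  · have hfat := kf_fat hE h2 h3
    have hc3 := kf_card3 hE h1
    have hinj : Set.InjOn (· - 1) (E.erase (m+2)) := by
      intro a ha b hb hab
      have ha' := kf_elem_ge hE a (Finset.mem_of_mem_erase ha)
      have hb' := kf_elem_ge hE b (Finset.mem_of_mem_erase hb)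
      simp only at hab; omega
    have hcard' : ((E.erase (m+2)).image (· - 1)).card = E.card - 1 := by
      rw [Finset.card_image_of_injOn hinj, Finset.card_erase_of_mem hmem]
    rw [mem_Gf]
    constructor
    · intro y hy
      simp only [Finset.mem_image, Finset.mem_erase] at hy
      obtain ⟨x, ⟨hne, hx⟩, rfl⟩ := hy
      have := hsub hx
      simp only [Finset.mem_Icc] at this ⊢
      have := hfat x hx
      omega
    · intro y hy
      rw [hcard']
      simp only [Finset.mem_image, Finset.mem_erase] at hy
      obtain ⟨x, ⟨hne, hx⟩, rfl⟩ := hy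
      have := hfat x hx
      have := kf_elem_ge hE x hx
      omega

lemma gf_singleton_facts {m j : ℕ} (h : ({j} : Finset ℕ) ∈ Gf m) :
    2 ≤ j ∧ j ≤ m := by
  obtain ⟨hsub, hc⟩ := mem_Gf.mp h
  have h1 := hsub (Finset.mem_singleton_self j)
  simp only [Finset.mem_Icc] at h1
  have h2 := hc j (Finset.mem_singleton_self j)
  simp only [Finset.card_singleton] at h2
  omega

lemma psi_mem (m : ℕ) {S : Finset ℕ} (hS : S ∈ Gf m) : psi m S ∈ Kf (m+1) := by
  obtain ⟨hsub, hc⟩ := mem_Gf.mp hS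
  unfold psi
  rw [mem_Kf, show m+1+1 = m+2 from rfl]
  split_ifs with h1 h2 h3
  · refine ⟨?_, by simp, by simp, ?_⟩
    · simp only [Finset.singleton_subset_iff, Finset.mem_Icc]; omega
    · intro x hx
      simp only [Finset.mem_singleton] at hx
      subst hx
      have hle : (({m+2} : Finset ℕ) \ {2,3}).card ≤ 1 :=
        le_trans (Finset.card_le_card (Finset.sdiff_subset)) (by simp)
      omega
  · subst h2
    obtain ⟨hj2, hjm⟩ := gf_singleton_facts hS
    have hm2 : 2 ≤ m := hj2.trans hjm
    have hsd : ({2, 3, m+2} : Finset ℕ) \ {2,3} = {m+2} := by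
      ext y
      simp only [Finset.mem_sdiff, Finset.mem_insert, Finset.mem_singleton]
      omega
    refine ⟨?_, by simp, ?_, ?_⟩
    · intro y hy
      simp only [Finset.mem_insert, Finset.mem_singleton] at hy
      simp only [Finset.mem_Icc]
      omega
    · rw [card_triple (by omega) (by omega) (by omega)]
      omega
    · intro x hx
      rw [hsd]
      simp only [Finset.mem_insert, Finset.mem_singleton] at hx
      simp only [Finset.card_singleton]
      omega
  · obtain ⟨j, rfl⟩ := Finset.card_eq_one.mp h3
    obtain ⟨hj2, hjm⟩ := gf_singleton_facts hS
    have hjm' : j ≠ m := fun he => h2 (by rw [he])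
    have hm3 : 3 ≤ m := by omega
    rw [Finset.sum_singleton]
    have hsd : ({3, id j + 2, m+2} : Finset ℕ) \ {2,3} = {id j + 2, m+2} := by
      ext y
      simp only [Finset.mem_sdiff, Finset.mem_insert, Finset.mem_singleton, id_eq]
      omega
    refine ⟨?_, by simp, ?_, ?_⟩
    · intro y hy
      simp only [Finset.mem_insert, Finset.mem_singleton, id_eq] at hy
      simp only [Finset.mem_Icc]
      omega
    · rw [card_triple (by simp; omega) (by simp; omega) (by simp; omega)]
      omega
    · intro x hx
      rw [hsd]
      have hc2 : ({id j + 2, m+2} : Finset ℕ).card ≤ 2 := Finset.card_insert_le _ _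
      simp only [Finset.mem_insert, Finset.mem_singleton, id_eq] at hx
      omega
  · have hcS : 2 ≤ S.card := by
      have h0 : S.card ≠ 0 := fun h => h1 (Finset.card_eq_zero.mp h)
      omega
    have hSel : ∀ s ∈ S, 3 ≤ s := by
      intro s hs
      have := hc s hs
      omega
    have hm3 : 3 ≤ m := by
      obtain ⟨s, hs⟩ := Finset.nonempty_iff_ne_empty.mpr h1
      have := hSel s hs
      have := hsub hs
      simp only [Finset.mem_Icc] at this
      omega
    have hnm : m+2 ∉ S.image (· + 1) := by
      simp only [Finset.mem_image]
      rintro ⟨t, ht, h⟩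
      have := hsub ht
      simp only [Finset.mem_Icc] at this
      omega
    have hcardE : (insert (m+2) (S.image (· + 1))).card = S.card + 1 := by
      rw [Finset.card_insert_of_notMem hnm,
        Finset.card_image_of_injective _ (add_left_injective 1)]
    have hScm : S.card < m := by
      obtain ⟨s, hs⟩ := Finset.nonempty_iff_ne_empty.mpr h1
      have := hc s hs
      have := hsub hs
      simp only [Finset.mem_Icc] at this
      omega
    have hsd : insert (m+2) (S.image (· + 1)) \ {2,3} = insert (m+2) (S.image (· + 1)) := by
      ext y
      simp only [Finset.mem_sdiff, Finset.mem_insert, Finset.mem_singleton]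
      constructor
      · exact fun h => h.1
      · intro hy
        refine ⟨hy, ?_⟩
        rcases hy with rfl | hy
        · omega
        · simp only [Finset.mem_image] at hy
          obtain ⟨t, ht, rfl⟩ := hy
          have := hSel t ht
          omega
    refine ⟨?_, Finset.mem_insert_self _ _, by omega, ?_⟩
    · intro y hy
      simp only [Finset.mem_insert, Finset.mem_image] at hy
      simp only [Finset.mem_Icc]
      rcases hy with rfl | ⟨t, ht, rfl⟩
      · omega
      · have := hsub ht
        simp only [Finset.mem_Icc] at this
        omega
    · intro x hx
      rw [hsd, hcardE]
      simp only [Finset.mem_insert, Finset.mem_image] at hx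
      rcases hx with rfl | ⟨t, ht, rfl⟩
      · omega
      · have := hc t ht
        omega

lemma psi_phi (m : ℕ) {E : Finset ℕ} (hE : E ∈ Kf (m+1)) : psi m (phi m E) = E := by
  obtain ⟨hsub, hmem, hcard, hcond⟩ := mem_Kf.mp hE
  unfold phi
  split_ifs with h1 h2 h3
  · rw [kf_singleton hE h1]
    simp [psi]
  · obtain ⟨hEeq, hm4⟩ := kf_two hE h1 h2
    have hm2 : 2 ≤ m := by omega
    unfold psi
    rw [if_neg (Finset.singleton_ne_empty m), if_pos rfl]
    exact hEeq.symm
  · obtain ⟨x, hx4, hxn, hEeq, hsum⟩ := kf_three hE h1 h2 h3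
    rw [hsum]
    unfold psi
    rw [if_neg (Finset.singleton_ne_empty _), if_neg (by
        rw [Finset.singleton_inj]
        omega),
      if_pos (Finset.card_singleton _), Finset.sum_singleton]
    rw [hEeq]
    have : id (x - 2) + 2 = x := by simp; omega
    rw [this]
  · have hfat := kf_fat hE h2 h3
    have hc3 := kf_card3 hE h1
    have hinj : Set.InjOn (· - 1) (E.erase (m+2)) := by
      intro a ha b hb hab
      have ha' := kf_elem_ge hE a (Finset.mem_of_mem_erase ha)
      have hb' := kf_elem_ge hE b (Finset.mem_of_mem_erase hb)
      simp only at hab; omega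
    have hcard' : ((E.erase (m+2)).image (· - 1)).card = E.card - 1 := by
      rw [Finset.card_image_of_injOn hinj, Finset.card_erase_of_mem hmem]
    have hc2 : 2 ≤ ((E.erase (m+2)).image (· - 1)).card := by omega
    unfold psi
    rw [if_neg (by
        intro h
        rw [h] at hc2
        simp at hc2),
      if_neg (by
        intro h
        rw [h] at hc2
        simp at hc2),
      if_neg (by omega)]
    rw [image_up_down _ (by
      intro x hx
      have := kf_elem_ge hE x (Finset.mem_of_mem_erase hx)
      omega)]
    exact Finset.insert_erase hmem

lemma phi_psi (m : ℕ) {S : Finset ℕ} (hS : S ∈ Gf m) : phi m (psi m S) = S := by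
  obtain ⟨hsub, hc⟩ := mem_Gf.mp hS
  unfold psi
  split_ifs with h1 h2 h3
  · subst h1
    simp [phi]
  · subst h2
    obtain ⟨hm2, _⟩ := gf_singleton_facts hS
    unfold phi
    rw [if_neg (by
        rw [card_triple (by omega) (by omega) (by omega)]
        omega),
      if_pos (Finset.mem_insert_self 2 _)]
  · obtain ⟨j, rfl⟩ := Finset.card_eq_one.mp h3
    obtain ⟨hj2, hjm⟩ := gf_singleton_facts hS
    have hjm' : j ≠ m := fun he => h2 (by rw [he])
    have hm3 : 3 ≤ m := by omega
    rw [Finset.sum_singleton]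
    have hid : id j + 2 = j + 2 := rfl
    rw [hid]
    unfold phi
    rw [if_neg (by
        rw [card_triple (by omega) (by omega) (by omega)]
        omega),
      if_neg (by
        simp only [Finset.mem_insert, Finset.mem_singleton]
        omega),
      if_pos (Finset.mem_insert_self 3 _)]
    rw [erase_triple (by omega) (by omega) (by omega), Finset.sum_singleton]
    simp only [id_eq, Finset.singleton_inj]
    omega
  · have hcS : 2 ≤ S.card := by
      have h0 : S.card ≠ 0 := fun h => h1 (Finset.card_eq_zero.mp h)
      omega
    have hSel : ∀ s ∈ S, 3 ≤ s := by
      intro s hs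
      have := hc s hs
      omega
    have hm3 : 3 ≤ m := by
      obtain ⟨s, hs⟩ := Finset.nonempty_iff_ne_empty.mpr h1
      have := hSel s hs
      have := hsub hs
      simp only [Finset.mem_Icc] at this
      omega
    have hnm : m+2 ∉ S.image (· + 1) := by
      simp only [Finset.mem_image]
      rintro ⟨t, ht, h⟩
      have := hsub ht
      simp only [Finset.mem_Icc] at this
      omega
    have hcardE : (insert (m+2) (S.image (· + 1))).card = S.card + 1 := by
      rw [Finset.card_insert_of_notMem hnm,
        Finset.card_image_of_injective _ (add_left_injective 1)]
    unfold phi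
    rw [if_neg (by omega),
      if_neg (by
        simp only [Finset.mem_insert, Finset.mem_image]
        push_neg
        refine ⟨by omega, ?_⟩
        intro t ht
        have := hSel t ht
        omega),
      if_neg (by
        simp only [Finset.mem_insert, Finset.mem_image]
        push_neg
        refine ⟨by omega, ?_⟩
        intro t ht
        have := hSel t ht
        omega),
      Finset.erase_insert hnm, image_down_up]


lemma kf_card_eq (m : ℕ) : (Kf (m+1)).card = (Gf m).card :=
  Finset.card_bij' (fun E _ => phi m E) (fun S _ => psi m S)
    (fun E hE => phi_mem m hE) (fun S hS => psi_mem m hS)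
    (fun E hE => psi_phi m hE) (fun S hS => phi_psi m hS)

/-- The number of finite sets `E` of positive integers with `max E = n+1`,
`min E > ω_{2,3}(E)`, and `|E| ≠ 2` equals `F n`. -/
theorem stmt6 (n : ℕ) (hn : 1 ≤ n) :
    {E : Finset ℕ | ∃ h : E.Nonempty, (∀ x ∈ E, 0 < x) ∧
      E.max' h = n + 1 ∧ (E \ {2, 3}).card < E.min' h ∧ E.card ≠ 2}.ncard
      = Nat.fib n := by
  have hset : {E : Finset ℕ | ∃ h : E.Nonempty, (∀ x ∈ E, 0 < x) ∧
      E.max' h = n + 1 ∧ (E \ {2, 3}).card < E.min' h ∧ E.card ≠ 2} = ↑(Kf n) := by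
    ext E
    simp only [Set.mem_setOf_eq, Finset.mem_coe, mem_Kf]
    constructor
    · rintro ⟨h, hpos, hmax, hmin, hcard⟩
      have hmemE : n+1 ∈ E := hmax ▸ E.max'_mem h
      refine ⟨fun x hx => ?_, hmemE, hcard,
        fun x hx => lt_of_lt_of_le hmin (E.min'_le x hx)⟩
      simp only [Finset.mem_Icc]
      exact ⟨hpos x hx, hmax ▸ E.le_max' x hx⟩
    · rintro ⟨hsub, hmem, hcard, hcond⟩
      have h : E.Nonempty := ⟨n+1, hmem⟩
      refine ⟨h, fun x hx => ?_, ?_, hcond _ (E.min'_mem h), hcard⟩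
      · exact (Finset.mem_Icc.mp (hsub hx)).1
      · exact le_antisymm (Finset.max'_le _ h _
          (fun x hx => (Finset.mem_Icc.mp (hsub hx)).2)) (E.le_max' _ hmem)
  rw [hset, Set.ncard_coe_finset]
  obtain ⟨m, rfl⟩ : ∃ m, n = m + 1 := ⟨n-1, by omega⟩
  rw [kf_card_eq, gf_card]
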